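/- Set r = 4 − √14 and d = r·√(3/2). Let v₁,…,v₆ be the points ±√2·e₁, ±√2·e₂, ±√2·e₃ of ℝ³ (centers of six unit spheres forming a regular octahedron of edge 2), and let q_ε = (d/√3)·(ε₁, ε₂, ε₃) for each sign vector ε ∈ {−1,1}³ with ε₁ε₂ε₃ = 1 (four points). Then dist(q_ε, q_{ε'}) = 2r for ε ≠ ε', and each q_ε is at distance exactly 1 + r from the three points √2·ε₁e₁, √2·ε₂e₂, √2·ε₃e₃ (the vertices of the corresponding octahedron face) and at distance greater than 1 + r from the other three vᵢ. Hence the octahedral hole of six unit spheres can be filled by four pairwise tangent spheres of radius 4 − √14, each tangent to the three unit spheres of one of four alternating faces of the octahedron. -/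

import Mathlib

open Real

set_option maxHeartbeats 1000000 in
/-- With `r = 4 − √14` and `d = r√(3/2)`, consider the six points `±√2·eᵢ` of `ℝ³`
(centers of six unit spheres forming a regular octahedron of edge 2, here
`v i σ = √2·σ·eᵢ`), and for each sign vector `ε ∈ {−1,1}³` with `ε₁ε₂ε₃ = 1` the
point `q ε = (d/√3)·(ε₁, ε₂, ε₃)`. Distinct points `q ε`, `q ε'` are at distance `2r`,
and each `q ε` is at distance exactly `1 + r` from the three octahedron vertices
`√2·εᵢ·eᵢ` of the corresponding face, and at distance greater than `1 + r` from the
other three vertices: the octahedral hole of six unit spheres can be filled by four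
pairwise tangent spheres of radius `4 − √14`, each tangent to the three unit spheres
of one of four alternating faces of the octahedron. -/
theorem octahedral_hole_four_spheres :
    let r : ℝ := 4 - Real.sqrt 14
    let d : ℝ := r * Real.sqrt (3 / 2)
    let v : Fin 3 → ℝ → EuclideanSpace ℝ (Fin 3) := fun i σ =>
      EuclideanSpace.single i (Real.sqrt 2 * σ)
    let q : (Fin 3 → ℝ) → EuclideanSpace ℝ (Fin 3) := fun ε =>
      (WithLp.toLp 2 (fun i => (d / Real.sqrt 3) * ε i) : EuclideanSpace ℝ (Fin 3))
    ∀ ε ε' : Fin 3 → ℝ,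
      (∀ i, ε i = 1 ∨ ε i = -1) → ε 0 * ε 1 * ε 2 = 1 →
      (∀ i, ε' i = 1 ∨ ε' i = -1) → ε' 0 * ε' 1 * ε' 2 = 1 →
      (ε ≠ ε' → dist (q ε) (q ε') = 2 * r) ∧
      (∀ i, dist (q ε) (v i (ε i)) = 1 + r) ∧
      (∀ i, dist (q ε) (v i (-ε i)) > 1 + r) := by
  intro r d v q ε ε' h hp h' hp'
  have hs14 : Real.sqrt 14 * Real.sqrt 14 = 14 := Real.mul_self_sqrt (by norm_num)
  have h14 : Real.sqrt 14 < 4 := by nlinarith [Real.sqrt_nonneg 14]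
  have hr0 : 0 < r := by simp only [r]; linarith
  have hrq : r ^ 2 + 2 = 8 * r := by simp only [r]; nlinarith
  have hs2 : Real.sqrt 2 * Real.sqrt 2 = 2 := Real.mul_self_sqrt (by norm_num)
  have hs3 : Real.sqrt 3 * Real.sqrt 3 = 3 := Real.mul_self_sqrt (by norm_num)
  have hs2p : (0:ℝ) < Real.sqrt 2 := Real.sqrt_pos.mpr (by norm_num)
  have hs3p : (0:ℝ) < Real.sqrt 3 := Real.sqrt_pos.mpr (by norm_num)
  have hc : d / Real.sqrt 3 = r / Real.sqrt 2 := by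
    have hdiv : Real.sqrt ((3:ℝ)/2) = Real.sqrt 3 / Real.sqrt 2 :=
      Real.sqrt_div (by norm_num) 2
    simp only [d, hdiv]
    field_simp
  have hc' : d / Real.sqrt 3 = r * Real.sqrt 2 / 2 := by
    rw [hc, div_eq_div_iff hs2p.ne' (by norm_num : (2:ℝ) ≠ 0)]
    linear_combination (-r) * hs2
  have e0 : ε 0 ^ 2 = 1 := by rcases h 0 with h0 | h0 <;> rw [h0] <;> norm_num
  have e1 : ε 1 ^ 2 = 1 := by rcases h 1 with h0 | h0 <;> rw [h0] <;> norm_num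
  have e2 : ε 2 ^ 2 = 1 := by rcases h 2 with h0 | h0 <;> rw [h0] <;> norm_num
  have main : ∀ x y : EuclideanSpace ℝ (Fin 3), ∀ t : ℝ, 0 ≤ t →
      dist x y ^ 2 = t ^ 2 → dist x y = t := by
    intro x y t ht hxy
    have := dist_nonneg (x := x) (y := y)
    nlinarith
  refine ⟨?_, ?_, ?_⟩
  · intro hne
    have key : (ε 0 - ε' 0) ^ 2 + (ε 1 - ε' 1) ^ 2 + (ε 2 - ε' 2) ^ 2 = 8 := by
      rcases h 0 with h0 | h0 <;> rcases h 1 with h1 | h1 <;> rcases h 2 with h2 | h2 <;>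
      rcases h' 0 with h0' | h0' <;> rcases h' 1 with h1' | h1' <;> rcases h' 2 with h2' | h2' <;>
      first
        | (exfalso; apply hne; funext i; fin_cases i <;>
            first
              | exact h0.trans h0'.symm
              | exact h1.trans h1'.symm
              | exact h2.trans h2'.symm)
        | (norm_num [h0, h1, h2, h0', h1', h2'] at hp <;> norm_num [h0, h1, h2, h0', h1', h2'] at hp' <;> norm_num [h0, h1, h2, h0', h1', h2'])
    apply main _ _ (2 * r) (by positivity)
    rw [EuclideanSpace.dist_eq, Real.sq_sqrt (by positivity), Fin.sum_univ_three]
    simp only [q, Real.dist_eq, sq_abs, hc']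
    linear_combination (r * Real.sqrt 2 / 2) ^ 2 * key + 2 * r ^ 2 * hs2
  · intro i
    fin_cases i
    · show dist (q ε) (v 0 (ε 0)) = 1 + r
      apply main _ _ _ (by positivity)
      rw [EuclideanSpace.dist_eq, Real.sq_sqrt (by positivity), Fin.sum_univ_three]
      simp only [q, v, Real.dist_eq, sq_abs, EuclideanSpace.single_apply, hc']
      norm_num [Fin.ext_iff]
      linear_combination (r * Real.sqrt 2 / 2 - Real.sqrt 2) ^ 2 * e0
        + (r * Real.sqrt 2 / 2) ^ 2 * e1 + (r * Real.sqrt 2 / 2) ^ 2 * e2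
        + (3 * r ^ 2 / 4 - r + 1) * hs2 + (1 / 2 : ℝ) * hrq
    · show dist (q ε) (v 1 (ε 1)) = 1 + r
      apply main _ _ _ (by positivity)
      rw [EuclideanSpace.dist_eq, Real.sq_sqrt (by positivity), Fin.sum_univ_three]
      simp only [q, v, Real.dist_eq, sq_abs, EuclideanSpace.single_apply, hc']
      norm_num [Fin.ext_iff]
      linear_combination (r * Real.sqrt 2 / 2) ^ 2 * e0
        + (r * Real.sqrt 2 / 2 - Real.sqrt 2) ^ 2 * e1 + (r * Real.sqrt 2 / 2) ^ 2 * e2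
        + (3 * r ^ 2 / 4 - r + 1) * hs2 + (1 / 2 : ℝ) * hrq
    · show dist (q ε) (v 2 (ε 2)) = 1 + r
      apply main _ _ _ (by positivity)
      rw [EuclideanSpace.dist_eq, Real.sq_sqrt (by positivity), Fin.sum_univ_three]
      simp only [q, v, Real.dist_eq, sq_abs, EuclideanSpace.single_apply, hc']
      norm_num [Fin.ext_iff]
      linear_combination (r * Real.sqrt 2 / 2) ^ 2 * e0
        + (r * Real.sqrt 2 / 2) ^ 2 * e1 + (r * Real.sqrt 2 / 2 - Real.sqrt 2) ^ 2 * e2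
        + (3 * r ^ 2 / 4 - r + 1) * hs2 + (1 / 2 : ℝ) * hrq
  · intro i
    have step : ∀ j : Fin 3, (1 + r) ^ 2 < dist (q ε) (v j (-ε j)) ^ 2 →
        1 + r < dist (q ε) (v j (-ε j)) := by
      intro j hj
      nlinarith [dist_nonneg (x := q ε) (y := v j (-ε j)), hr0]
    fin_cases i
    · show dist (q ε) (v 0 (-ε 0)) > 1 + r
      apply step
      rw [EuclideanSpace.dist_eq, Real.sq_sqrt (by positivity), Fin.sum_univ_three]
      simp only [q, v, Real.dist_eq, sq_abs, EuclideanSpace.single_apply, hc']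
      norm_num [Fin.ext_iff]
      have heq : (r * Real.sqrt 2 / 2 * ε 0 + Real.sqrt 2 * ε 0) ^ 2
          + (r * Real.sqrt 2 / 2 * ε 1) ^ 2 + (r * Real.sqrt 2 / 2 * ε 2) ^ 2
          = (1 + r) ^ 2 + (1 + r ^ 2 / 2) := by
        linear_combination (r * Real.sqrt 2 / 2 + Real.sqrt 2) ^ 2 * e0
          + (r * Real.sqrt 2 / 2) ^ 2 * e1 + (r * Real.sqrt 2 / 2) ^ 2 * e2
          + (3 * r ^ 2 / 4 + r + 1) * hs2
      nlinarith [heq, sq_nonneg r]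
    · show dist (q ε) (v 1 (-ε 1)) > 1 + r
      apply step
      rw [EuclideanSpace.dist_eq, Real.sq_sqrt (by positivity), Fin.sum_univ_three]
      simp only [q, v, Real.dist_eq, sq_abs, EuclideanSpace.single_apply, hc']
      norm_num [Fin.ext_iff]
      have heq : (r * Real.sqrt 2 / 2 * ε 1 + Real.sqrt 2 * ε 1) ^ 2
          + (r * Real.sqrt 2 / 2 * ε 0) ^ 2 + (r * Real.sqrt 2 / 2 * ε 2) ^ 2
          = (1 + r) ^ 2 + (1 + r ^ 2 / 2) := by
        linear_combination (r * Real.sqrt 2 / 2 + Real.sqrt 2) ^ 2 * e1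
          + (r * Real.sqrt 2 / 2) ^ 2 * e0 + (r * Real.sqrt 2 / 2) ^ 2 * e2
          + (3 * r ^ 2 / 4 + r + 1) * hs2
      nlinarith [heq, sq_nonneg r]
    · show dist (q ε) (v 2 (-ε 2)) > 1 + r
      apply step
      rw [EuclideanSpace.dist_eq, Real.sq_sqrt (by positivity), Fin.sum_univ_three]
      simp only [q, v, Real.dist_eq, sq_abs, EuclideanSpace.single_apply, hc']
      norm_num [Fin.ext_iff]
      have heq : (r * Real.sqrt 2 / 2 * ε 2 + Real.sqrt 2 * ε 2) ^ 2
          + (r * Real.sqrt 2 / 2 * ε 0) ^ 2 + (r * Real.sqrt 2 / 2 * ε 1) ^ 2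
          = (1 + r) ^ 2 + (1 + r ^ 2 / 2) := by
        linear_combination (r * Real.sqrt 2 / 2 + Real.sqrt 2) ^ 2 * e2
          + (r * Real.sqrt 2 / 2) ^ 2 * e0 + (r * Real.sqrt 2 / 2) ^ 2 * e1
          + (3 * r ^ 2 / 4 + r + 1) * hs2
      nlinarith [heq, sq_nonneg r]
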